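/- Let g_1,…,g_p be univalent contractions on a square S with g_i(S) ⋐ S, and suppose there exist constants 0 < a < 1 and R > 0 such that every composition of k of the maps sends S into a set of diameter at most a^k, and every image g_i(S) is at distance at least R from the boundary of S. Then the distortion D = sup_n S_n(g_1,…,g_p) is finite, where S_n = max_{|I|=n} max_{z,z'∈cl(S)} |g'_I(z)|/|g'_I(z')|; moreover for every ε > 0 there is n_ε such that S_n ≤ S_{n_ε}·(1+ε) for all n ≥ n_ε. -/

import Mathlib

open Metric

/-- The open axis-parallel square centered at 0 with side length `s`. -/
def square0 (s : ℝ) : Set ℂ := {z : ℂ | |z.re| < s/2 ∧ |z.im| < s/2}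

/-- For a word `I = (i₁,…,i_k)`, the composition `f_I = f_{i_k} ∘ ⋯ ∘ f_{i_1}`. -/
def wordMap {p : ℕ} (f : Fin p → ℂ → ℂ) (I : List (Fin p)) (z : ℂ) : ℂ :=
  I.foldl (fun w i => f i w) z

/-- The inscribed-disk diameter of `P` centered at `c`: the diameter of the largest open
disk of center `c` contained in `P`. -/
noncomputable def inscDiam (P : Set ℂ) (c : ℂ) : ℝ :=
  sSup {d : ℝ | 0 ≤ d ∧ ball c (d/2) ⊆ P}

/-- The escribed-disk diameter of `P` centered at `c`: the diameter of the smallest disk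
of center `c` containing `P`. -/
noncomputable def escDiam (P : Set ℂ) (c : ℂ) : ℝ :=
  sInf {d : ℝ | 0 ≤ d ∧ P ⊆ ball c (d/2)}

/-- `S_n`: the maximal distortion over words of length `n`. -/
noncomputable def Sn {p : ℕ} (g : Fin p → ℂ → ℂ) (s : ℝ) (n : ℕ) : ℝ :=
  sSup {x : ℝ | ∃ I : List (Fin p), I.length = n ∧
    ∃ z ∈ closure (square0 s), ∃ z' ∈ closure (square0 s),
      x = ‖deriv (wordMap g I) z‖ / ‖deriv (wordMap g I) z'‖}

section Aux
open Filter Set Complex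

/-- product of derivatives along a word -/
noncomputable def dProd {p : ℕ} (g : Fin p → ℂ → ℂ) : List (Fin p) → ℂ → ℂ
  | [], _ => 1
  | i :: I, z => deriv (g i) z * dProd g I (g i z)

@[simp] lemma dProd_nil {p : ℕ} (g : Fin p → ℂ → ℂ) (z : ℂ) : dProd g [] z = 1 := rfl
@[simp] lemma dProd_cons {p : ℕ} (g : Fin p → ℂ → ℂ) (i : Fin p) (I : List (Fin p)) (z : ℂ) :
    dProd g (i :: I) z = deriv (g i) z * dProd g I (g i z) := rfl

lemma wordMap_nil {p : ℕ} (g : Fin p → ℂ → ℂ) (z : ℂ) : wordMap g [] z = z := rfl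
lemma wordMap_cons {p : ℕ} (g : Fin p → ℂ → ℂ) (i : Fin p) (I : List (Fin p)) (z : ℂ) :
    wordMap g (i :: I) z = wordMap g I (g i z) := rfl
lemma wordMap_append {p : ℕ} (g : Fin p → ℂ → ℂ) (J L : List (Fin p)) (z : ℂ) :
    wordMap g (J ++ L) z = wordMap g L (wordMap g J z) := by
  simp [wordMap, List.foldl_append]

lemma convex_square0 (s : ℝ) : Convex ℝ (square0 s) := by
  rintro z hz w hw a b ha hb hab
  have hre : (a • z + b • w).re = a * z.re + b * w.re := by
    simp [Complex.add_re, Complex.real_smul, Complex.mul_re]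
  have him : (a • z + b • w).im = a * z.im + b * w.im := by
    simp [Complex.add_im, Complex.real_smul, Complex.mul_im]
  constructor
  · rw [hre]
    have h1 : |a * z.re + b * w.re| ≤ a * |z.re| + b * |w.re| := by
      calc |a * z.re + b * w.re| ≤ |a * z.re| + |b * w.re| := abs_add_le _ _
        _ = a * |z.re| + b * |w.re| := by rw [abs_mul, abs_mul, _root_.abs_of_nonneg ha, _root_.abs_of_nonneg hb]
    have h2 : a * |z.re| + b * |w.re| < s/2 := by
      rcases eq_or_lt_of_le ha with h | h
      · have hb1 : b = 1 := by linarith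
        rw [← h, hb1]
        simpa using hw.1
      · nlinarith [hz.1, hw.1.le, abs_nonneg w.re]
    linarith
  · rw [him]
    have h1 : |a * z.im + b * w.im| ≤ a * |z.im| + b * |w.im| := by
      calc |a * z.im + b * w.im| ≤ |a * z.im| + |b * w.im| := abs_add_le _ _
        _ = a * |z.im| + b * |w.im| := by rw [abs_mul, abs_mul, _root_.abs_of_nonneg ha, _root_.abs_of_nonneg hb]
    have h2 : a * |z.im| + b * |w.im| < s/2 := by
      rcases eq_or_lt_of_le ha with h | h
      · have hb1 : b = 1 := by linarith
        rw [← h, hb1]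
        simpa using hw.2
      · nlinarith [hz.2, hw.2.le, abs_nonneg w.im]
    linarith

lemma square0_subset_ball (s : ℝ) : square0 s ⊆ ball (0:ℂ) s := by
  rintro z ⟨h1, h2⟩
  rw [mem_ball_zero_iff]
  calc ‖z‖ ≤ |z.re| + |z.im| := Complex.norm_le_abs_re_add_abs_im z
    _ < s/2 + s/2 := by linarith
    _ = s := by ring

lemma exists_root_of_unity (n : ℕ) (hn2 : 2 ≤ n) :
    ∃ ω : ℂ, ω ^ n = 1 ∧ ω ≠ 1 ∧ ‖ω‖ = 1 := by
  have hn0 : (n:ℝ) ≠ 0 := by positivity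
  have hn0' : (n:ℂ) ≠ 0 := by exact_mod_cast hn0
  refine ⟨Complex.exp (((2 * Real.pi / n : ℝ) : ℂ) * Complex.I), ?_, ?_, ?_⟩
  · rw [← Complex.exp_nat_mul]
    have : (n:ℂ) * (((2 * Real.pi / n : ℝ) : ℂ) * Complex.I) = 2 * Real.pi * Complex.I := by
      push_cast
      field_simp
    rw [this, Complex.exp_two_pi_mul_I]
  · intro h1eq
    obtain ⟨k, hk⟩ := Complex.exp_eq_one_iff.mp h1eq
    push_cast at hk
    have h2 : ((2:ℂ) * Real.pi / n) = k * (2 * Real.pi) :=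
      mul_right_cancel₀ Complex.I_ne_zero (by linear_combination hk)
    have h3 : (2:ℂ) * Real.pi = k * (2 * Real.pi) * n := by
      field_simp at h2
      linear_combination (2 * (Real.pi:ℂ)) * h2
    have h4 : (2:ℝ) * Real.pi = k * (2 * Real.pi) * n := by exact_mod_cast h3
    have h5 : (k:ℝ) * n = 1 := by nlinarith [Real.pi_pos]
    have h6 : (k * n : ℤ) = 1 := by exact_mod_cast h5
    have h7 : (n:ℤ) ∣ 1 := Dvd.intro k (by linarith)
    have := Int.le_of_dvd one_pos h7
    omega
  · exact Complex.norm_exp_ofReal_mul_I _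

/-- An injective analytic map has nonvanishing derivative. -/
lemma deriv_ne_zero_of_injOn {f : ℂ → ℂ} {z₀ : ℂ} {V : Set ℂ}
    (hV : V ∈ nhds z₀) (hf : AnalyticAt ℂ f z₀) (hinj : Set.InjOn f V) :
    deriv f z₀ ≠ 0 := by
  intro hd
  have hz₀V : z₀ ∈ V := mem_of_mem_nhds hV
  set h : ℂ → ℂ := fun z => f z - f z₀ with hh_def
  have hh : AnalyticAt ℂ h z₀ := hf.sub analyticAt_const
  -- h is not eventually zero
  have hne : ¬ ∀ᶠ z in nhds z₀, h z = 0 := by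
    intro hev
    have h1 : ∀ᶠ z in nhdsWithin z₀ {z₀}ᶜ, (h z = 0 ∧ z ∈ V) ∧ z ∈ ({z₀}ᶜ : Set ℂ) :=
      (((hev.and (eventually_mem_set.mpr hV)).filter_mono nhdsWithin_le_nhds).and
        self_mem_nhdsWithin)
    obtain ⟨z, ⟨hz0, hzV⟩, hzne⟩ := h1.exists
    exact hzne (hinj hzV hz₀V (by simpa [hh_def, sub_eq_zero] using hz0))
  -- finite order n ≥ 2
  have hord : analyticOrderAt h z₀ ≠ ⊤ := fun ht => hne (analyticOrderAt_eq_top.mp ht)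
  obtain ⟨n, hn⟩ := WithTop.ne_top_iff_exists.mp hord
  obtain ⟨G, hG_an, hG0, hfg⟩ := (hh.analyticOrderAt_eq_natCast (n := n)).mp hn.symm
  have hn0 : n ≠ 0 := by
    intro h0
    subst h0
    have := hfg.self_of_nhds
    simp [hh_def] at this
    exact hG0 this.symm
  have hderiv_h : deriv h z₀ = 0 := by
    simp only [hh_def]
    rw [deriv_sub_const, hd]
  have hn1 : n ≠ 1 := by
    intro h1
    subst h1
    have hG' : HasDerivAt (fun z => (z - z₀) ^ 1 • G z) (G z₀) z₀ := by
      have h2 : HasDerivAt (fun z : ℂ => z - z₀) 1 z₀ := (hasDerivAt_id z₀).sub_const z₀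
      have h3 : HasDerivAt G (deriv G z₀) z₀ := hG_an.differentiableAt.hasDerivAt
      simpa using (h2.fun_mul h3)
    have : deriv h z₀ = G z₀ := by
      rw [Filter.EventuallyEq.deriv_eq hfg]
      exact hG'.deriv
    rw [hderiv_h] at this
    exact hG0 this.symm
  have hn2 : 2 ≤ n := by omega
  have hnC : (n:ℂ) ≠ 0 := by exact_mod_cast (by positivity : (n:ℝ) ≠ 0)
  -- analytic n-th root of G near z₀
  set r : ℂ → ℂ := fun z =>
    Complex.exp ((Complex.log (G z / G z₀) + Complex.log (G z₀)) / n) with hr_def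
  have hr_an : AnalyticAt ℂ r z₀ := by
    apply analyticAt_cexp.comp
    apply AnalyticAt.div _ analyticAt_const hnC
    apply AnalyticAt.add _ analyticAt_const
    apply (analyticAt_clog ?_).comp (hG_an.div analyticAt_const hG0)
    rw [Pi.div_apply, div_self hG0]
    exact Complex.one_mem_slitPlane
  have hr0 : ∀ z, r z ≠ 0 := fun z => Complex.exp_ne_zero _
  have hrn : ∀ᶠ z in nhds z₀, r z ^ n = G z := by
    filter_upwards [hG_an.continuousAt.eventually_ne hG0] with z hGz
    rw [hr_def]
    simp only
    rw [← Complex.exp_nat_mul, mul_div_cancel₀ _ hnC, Complex.exp_add,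
      Complex.exp_log (div_ne_zero hGz hG0), Complex.exp_log hG0]
    field_simp
  -- φ with φ^n = h and φ'(z₀) ≠ 0
  set φ : ℂ → ℂ := fun z => (z - z₀) * r z with hφ_def
  have hφ_an : AnalyticAt ℂ φ z₀ := ((analyticAt_id).sub analyticAt_const).mul hr_an
  have hφ0 : φ z₀ = 0 := by simp [hφ_def]
  have hφpow : ∀ᶠ z in nhds z₀, φ z ^ n = h z := by
    filter_upwards [hfg, hrn] with z h1 h2
    rw [hφ_def]
    simp only
    rw [mul_pow, h2, ← smul_eq_mul, ← h1]
  have hφderiv : deriv φ z₀ = r z₀ := by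
    have h2 : HasDerivAt (fun z : ℂ => z - z₀) 1 z₀ := (hasDerivAt_id z₀).sub_const z₀
    have h3 : HasDerivAt r (deriv r z₀) z₀ := hr_an.differentiableAt.hasDerivAt
    have := (h2.fun_mul h3).deriv
    simpa [hφ_def] using this
  have hφnc : ¬ ∀ᶠ z in nhds z₀, φ z = φ z₀ := by
    intro hc
    have : deriv φ z₀ = 0 := by
      have := Filter.EventuallyEq.deriv_eq (hc : φ =ᶠ[nhds z₀] fun _ => φ z₀)
      rw [this, deriv_const]
    rw [hφderiv] at this
    exact hr0 z₀ this
  have hmap : nhds (0:ℂ) ≤ map φ (nhds z₀) := by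
    have := hφ_an.eventually_constant_or_nhds_le_map_nhds_aux.resolve_left hφnc
    rwa [hφ0] at this
  -- extract two distinct preimages
  have hT : {z | φ z ^ n = h z ∧ z ∈ V} ∈ nhds z₀ :=
    (hφpow.and (eventually_mem_set.mpr hV))
  have himg : φ '' {z | φ z ^ n = h z ∧ z ∈ V} ∈ nhds (0:ℂ) :=
    hmap (image_mem_map hT)
  obtain ⟨δ, hδ0, hball⟩ := Metric.mem_nhds_iff.mp himg
  obtain ⟨ω, hωn, hω1, hωabs⟩ := exists_root_of_unity n hn2
  have hw0 : ((δ/2 : ℝ) : ℂ) ≠ 0 := by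
    simp only [ne_eq, Complex.ofReal_eq_zero]
    linarith
  have hw1 : ((δ/2 : ℝ) : ℂ) ∈ ball (0:ℂ) δ := by
    rw [mem_ball_zero_iff]
    simp only [Complex.norm_real, Real.norm_eq_abs]
    rw [abs_of_pos (by linarith)]
    linarith
  have hw2 : ω * ((δ/2 : ℝ) : ℂ) ∈ ball (0:ℂ) δ := by
    rw [mem_ball_zero_iff, norm_mul, hωabs, one_mul]
    simpa [mem_ball_zero_iff] using hw1
  obtain ⟨z₁, hz₁, hφ1⟩ := hball hw1
  obtain ⟨z₂, hz₂, hφ2⟩ := hball hw2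
  have hfz : f z₁ = f z₂ := by
    have e1 : h z₁ = ((δ/2 : ℝ) : ℂ) ^ n := by
      rw [← hz₁.1, hφ1]
    have e2 : h z₂ = ((δ/2 : ℝ) : ℂ) ^ n := by
      rw [← hz₂.1, hφ2, mul_pow, hωn, one_mul]
    have e3 := e1.trans e2.symm
    simp only [hh_def] at e3
    linear_combination e3
  have hz12 : z₁ = z₂ := hinj hz₁.2 hz₂.2 hfz
  rw [hz12, hφ2] at hφ1
  exact hω1 (mul_right_cancel₀ hw0 (by rw [one_mul]; exact hφ1))


end Aux

/-- If every composition of `k` maps of the IFS contracts the square `S` to a set of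
diameter at most `aᵏ` (`0 < a < 1`), and each image `g_i(S)` is at distance at least `R`
from the boundary of `S`, then the distortion `sup_n S_n` is finite; moreover for every
`ε > 0` there is `n_ε` with `S_n ≤ S_{n_ε}·(1 + ε)` for all `n ≥ n_ε`. -/
theorem distortion_bounded_and_stabilizes (p : ℕ) (s : ℝ) (hs : 0 < s)
    (U : Set ℂ) (hU : IsOpen U) (hSU : closure (square0 s) ⊆ U)
    (g : Fin p → ℂ → ℂ)
    (hg : ∀ i, DifferentiableOn ℂ (g i) U ∧ Set.InjOn (g i) U)
    (hin : ∀ i, closure (g i '' square0 s) ⊆ square0 s)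
    (a R : ℝ) (ha0 : 0 < a) (ha1 : a < 1) (hR : 0 < R)
    (hdiam : ∀ I : List (Fin p), I ≠ [] →
      Metric.diam (wordMap g I '' square0 s) ≤ a ^ I.length)
    (hdistance : ∀ i, ∀ z ∈ g i '' square0 s, ball z R ⊆ square0 s) :
    BddAbove (Set.range (Sn g s)) ∧
      ∀ ε > (0:ℝ), ∃ nε : ℕ, ∀ n ≥ nε, Sn g s n ≤ Sn g s nε * (1 + ε) := by
  classical
  set K := closure (square0 s) with hK_def
  have hsubK : square0 s ⊆ K := subset_closure
  have h0sq : (0:ℂ) ∈ square0 s := by constructor <;> simp <;> linarith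
  have hKne : K.Nonempty := ⟨0, hsubK h0sq⟩
  have hbd_sq : Bornology.IsBounded (square0 s) :=
    Metric.isBounded_ball.subset (square0_subset_ball s)
  have hKbd : Bornology.IsBounded K := hbd_sq.closure
  have hKcomp : IsCompact K := hbd_sq.isCompact_closure
  have hKconv : Convex ℝ K := (convex_square0 s).closure
  have h_an : ∀ i, ∀ z ∈ U, AnalyticAt ℂ (g i) z :=
    fun i z hz => (hg i).1.analyticAt (hU.mem_nhds hz)
  have hgan : ∀ i, AnalyticOnNhd ℂ (g i) U := fun i z hz => h_an i z hz
  have hmapsto : ∀ i, ∀ z ∈ K, g i z ∈ square0 s := by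
    intro i z hz
    have h1 : ContinuousOn (g i) K := (hg i).1.continuousOn.mono hSU
    exact hin i (h1.image_closure ⟨z, hz, rfl⟩)
  -- chain rule
  have key : ∀ I : List (Fin p), ∀ z ∈ K,
      wordMap g I z ∈ K ∧ HasDerivAt (wordMap g I) (dProd g I z) z := by
    intro I
    induction I with
    | nil =>
      intro z hz
      exact ⟨hz, by rw [dProd_nil]; exact hasDerivAt_id z⟩
    | cons i I ih =>
      intro z hz
      have hgz : g i z ∈ K := hsubK (hmapsto i z hz)
      have hgd : HasDerivAt (g i) (deriv (g i) z) z :=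
        ((hg i).1.differentiableAt (hU.mem_nhds (hSU hz))).hasDerivAt
      obtain ⟨hmem, hd⟩ := ih (g i z) hgz
      refine ⟨by simpa [wordMap_cons] using hmem, ?_⟩
      have hcomp := hd.comp z hgd
      have heq : (wordMap g I ∘ g i) = wordMap g (i :: I) := rfl
      rw [heq] at hcomp
      simpa [dProd_cons, mul_comm] using hcomp
  have hderiv_eq : ∀ I : List (Fin p), ∀ z ∈ K, deriv (wordMap g I) z = dProd g I z :=
    fun I z hz => ((key I z hz).2).deriv
  have hcont : ∀ I : List (Fin p), ContinuousOn (wordMap g I) K :=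
    fun I z hz => ((key I z hz).2).continuousAt.continuousWithinAt
  -- distances contract
  have hdistK : ∀ J : List (Fin p), J ≠ [] → ∀ z ∈ K, ∀ z' ∈ K,
      dist (wordMap g J z) (wordMap g J z') ≤ a ^ J.length := by
    intro J hJ z hz z' hz'
    have h1 : wordMap g J '' K ⊆ closure (wordMap g J '' square0 s) :=
      (hcont J).image_closure
    have himg_sub : wordMap g J '' square0 s ⊆ K := by
      rintro _ ⟨w, hw, rfl⟩
      exact (key J w (hsubK hw)).1
    have hbd : Bornology.IsBounded (closure (wordMap g J '' square0 s)) :=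
      (hKbd.subset himg_sub).closure
    calc dist (wordMap g J z) (wordMap g J z')
        ≤ Metric.diam (closure (wordMap g J '' square0 s)) :=
          Metric.dist_le_diam_of_mem hbd (h1 ⟨z, hz, rfl⟩) (h1 ⟨z', hz', rfl⟩)
      _ = Metric.diam (wordMap g J '' square0 s) := Metric.diam_closure _
      _ ≤ a ^ J.length := hdiam J hJ
  -- nonvanishing derivatives (uses injectivity)
  have hd_ne : ∀ i, ∀ z ∈ K, deriv (g i) z ≠ 0 := fun i z hz =>
    deriv_ne_zero_of_injOn (hU.mem_nhds (hSU hz)) (h_an i z (hSU hz)) (hg i).2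
  have hdprod_ne : ∀ I : List (Fin p), ∀ z ∈ K, dProd g I z ≠ 0 := by
    intro I
    induction I with
    | nil => intro z hz; simp
    | cons i I ih =>
      intro z hz
      exact mul_ne_zero (hd_ne i z hz) (ih (g i z) (hsubK (hmapsto i z hz)))
  -- one-step distortion estimate
  have hstep' : ∀ i : Fin p, ∃ c : ℝ, 0 ≤ c ∧ ∀ w ∈ K, ∀ w' ∈ K,
      ‖deriv (g i) w‖ ≤ (1 + c * dist w w') * ‖deriv (g i) w'‖ := by
    intro i
    have hdc : ContinuousOn (deriv (g i)) K :=
      fun z hz => ((hgan i).deriv z (hSU hz)).continuousAt.continuousWithinAt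
    have hd2c : ContinuousOn (deriv (deriv (g i))) K :=
      fun z hz => ((hgan i).deriv.deriv z (hSU hz)).continuousAt.continuousWithinAt
    obtain ⟨L, hL⟩ := hKcomp.exists_bound_of_continuousOn hd2c
    have hL0 : 0 ≤ L := le_trans (norm_nonneg _) (hL _ hKne.some_mem)
    have hdd : ∀ z ∈ K, HasDerivWithinAt (deriv (g i)) (deriv (deriv (g i)) z) K z :=
      fun z hz => (((hgan i).deriv z (hSU hz)).differentiableAt.hasDerivAt).hasDerivWithinAt
    obtain ⟨zm, hzmK, hzm⟩ := hKcomp.exists_isMinOn hKne (continuous_norm.comp_continuousOn hdc)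
    have hm0 : 0 < ‖deriv (g i) zm‖ := norm_pos_iff.mpr (hd_ne i zm hzmK)
    set m := ‖deriv (g i) zm‖ with hm_def
    refine ⟨L / m, div_nonneg hL0 hm0.le, ?_⟩
    intro w hw w' hw'
    have hlip : ‖deriv (g i) w - deriv (g i) w'‖ ≤ L * ‖w - w'‖ :=
      Convex.norm_image_sub_le_of_norm_hasDerivWithin_le hdd hL hKconv hw' hw
    have h1 : ‖deriv (g i) w‖ ≤ ‖deriv (g i) w'‖ + L * dist w w' := by
      rw [dist_eq_norm]
      have := norm_sub_norm_le (deriv (g i) w) (deriv (g i) w')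
      linarith
    have h2 : m ≤ ‖deriv (g i) w'‖ := hzm hw'
    have h3 : L / m * m = L := div_mul_cancel₀ L hm0.ne'
    nlinarith [mul_le_mul_of_nonneg_left h2 (mul_nonneg (div_nonneg hL0 hm0.le)
      (dist_nonneg (x := w) (y := w'))), dist_nonneg (x := w) (y := w'),
      norm_nonneg (deriv (g i) w')]
  choose c hc0 hc using hstep'
  set C := ∑ i : Fin p, c i with hC_def
  have hC0 : 0 ≤ C := Finset.sum_nonneg fun i _ => hc0 i
  have hciC : ∀ i, c i ≤ C := fun i =>
    Finset.single_le_sum (f := c) (fun j _ => hc0 j) (Finset.mem_univ i)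
  have hstep : ∀ i : Fin p, ∀ w ∈ K, ∀ w' ∈ K, ∀ t : ℝ, dist w w' ≤ t →
      ‖deriv (g i) w‖ ≤ (1 + C * t) * ‖deriv (g i) w'‖ := by
    intro i w hw w' hw' t ht
    have h1 := hc i w hw w' hw'
    have hd0 : (0:ℝ) ≤ dist w w' := dist_nonneg
    have h2 : c i * dist w w' ≤ C * t := by
      nlinarith [mul_nonneg (sub_nonneg.mpr (hciC i)) hd0,
        mul_nonneg hC0 (sub_nonneg.mpr ht)]
    nlinarith [norm_nonneg (deriv (g i) w')]
  have hfac : ∀ l : ℕ, (0:ℝ) ≤ 1 + C * a ^ l := fun l => by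
    nlinarith [mul_nonneg hC0 (pow_nonneg ha0.le l)]
  -- main inductive estimate along a word
  have est : ∀ I J : List (Fin p), J ≠ [] → ∀ z ∈ K, ∀ z' ∈ K,
      ‖dProd g I (wordMap g J z)‖ ≤
        (∏ k ∈ Finset.range I.length, (1 + C * a ^ (J.length + k))) *
          ‖dProd g I (wordMap g J z')‖ := by
    intro I
    induction I with
    | nil => intro J hJ z hz z' hz'; simp
    | cons i I ih =>
      intro J hJ z hz z' hz'
      have hwz : wordMap g J z ∈ K := (key J z hz).1
      have hwz' : wordMap g J z' ∈ K := (key J z' hz').1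
      have hdJ : dist (wordMap g J z) (wordMap g J z') ≤ a ^ J.length :=
        hdistK J hJ z hz z' hz'
      have hf1 : ‖deriv (g i) (wordMap g J z)‖ ≤
          (1 + C * a ^ J.length) * ‖deriv (g i) (wordMap g J z')‖ :=
        hstep i _ hwz _ hwz' _ hdJ
      have hgw : g i (wordMap g J z) = wordMap g (J ++ [i]) z := by
        rw [wordMap_append]; rfl
      have hgw' : g i (wordMap g J z') = wordMap g (J ++ [i]) z' := by
        rw [wordMap_append]; rfl
      have hIH := ih (J ++ [i]) (by simp) z hz z' hz'
      simp only [List.length_append, List.length_singleton] at hIH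
      have hsplit : (∏ k ∈ Finset.range (I.length + 1), (1 + C * a ^ (J.length + k)))
          = (∏ k ∈ Finset.range I.length, (1 + C * a ^ (J.length + 1 + k))) *
            (1 + C * a ^ J.length) := by
        rw [Finset.prod_range_succ']
        have h1 : ∀ k : ℕ, J.length + (k+1) = J.length + 1 + k := fun k => by omega
        simp only [Nat.add_zero]
        refine congrArg (· * (1 + C * a ^ J.length)) ?_
        exact Finset.prod_congr rfl fun k _ => by rw [h1 k]
      calc ‖dProd g (i :: I) (wordMap g J z)‖
          = ‖deriv (g i) (wordMap g J z)‖ * ‖dProd g I (wordMap g (J ++ [i]) z)‖ := by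
            rw [dProd_cons, norm_mul, hgw]
        _ ≤ ((1 + C * a ^ J.length) * ‖deriv (g i) (wordMap g J z')‖) *
              ((∏ k ∈ Finset.range I.length, (1 + C * a ^ (J.length + 1 + k))) *
                ‖dProd g I (wordMap g (J ++ [i]) z')‖) :=
            mul_le_mul hf1 hIH (norm_nonneg _)
              (mul_nonneg (hfac _) (norm_nonneg _))
        _ = (∏ k ∈ Finset.range (I.length + 1), (1 + C * a ^ (J.length + k))) *
              (‖deriv (g i) (wordMap g J z')‖ *
                ‖dProd g I (wordMap g (J ++ [i]) z')‖) := by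
            rw [hsplit]; ring
        _ = _ := by
            rw [List.length_cons, dProd_cons, norm_mul, hgw']
  -- geometric bounds
  have hgeom : ∀ mm : ℕ, (∑ k ∈ Finset.range mm, a ^ k) ≤ 1 / (1 - a) := by
    intro mm
    rw [geom_sum_eq (ne_of_lt ha1)]
    have h1 : (a ^ mm - 1) / (a - 1) = (1 - a ^ mm) / (1 - a) := by
      rw [div_eq_div_iff (by linarith) (by linarith)]
      ring
    rw [h1]
    exact (div_le_div_iff_of_pos_right (by linarith)).mpr (by nlinarith [pow_nonneg ha0.le mm])
  have prodbd : ∀ (mm l : ℕ), 1 ≤ l →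
      (∏ k ∈ Finset.range mm, (1 + C * a ^ (l + k))) ≤ Real.exp (C * a / (1 - a)) := by
    intro mm l hl
    have h1 : (∏ k ∈ Finset.range mm, (1 + C * a ^ (l + k)))
        ≤ ∏ k ∈ Finset.range mm, Real.exp (C * a ^ (l + k)) := by
      apply Finset.prod_le_prod (fun k _ => hfac _) (fun k _ => ?_)
      have := Real.add_one_le_exp (C * a ^ (l + k))
      linarith
    rw [← Real.exp_sum] at h1
    apply h1.trans
    apply Real.exp_le_exp.mpr
    have h2 : ∑ k ∈ Finset.range mm, C * a ^ (l + k)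
        = C * a ^ l * ∑ k ∈ Finset.range mm, a ^ k := by
      rw [Finset.mul_sum]
      apply Finset.sum_congr rfl
      intro k _
      rw [pow_add]; ring
    rw [h2]
    have h3 : a ^ l ≤ a := by
      calc a ^ l ≤ a ^ 1 := pow_le_pow_of_le_one ha0.le ha1.le hl
        _ = a := pow_one a
    have h4 : ∑ k ∈ Finset.range mm, a ^ k ≤ 1 / (1 - a) := hgeom mm
    have h5 : (0:ℝ) ≤ ∑ k ∈ Finset.range mm, a ^ k :=
      Finset.sum_nonneg fun k _ => pow_nonneg ha0.le k
    have h6 : (0:ℝ) < 1 - a := by linarith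
    calc C * a ^ l * ∑ k ∈ Finset.range mm, a ^ k
        ≤ C * a * (1 / (1 - a)) := by
          apply mul_le_mul ?_ h4 h5 (by positivity)
          nlinarith [pow_nonneg ha0.le l]
      _ = C * a / (1 - a) := by ring
  -- the global bound B
  set B := (1 + C * Metric.diam K) * Real.exp (C * a / (1 - a)) with hB_def
  have hdiamK0 : 0 ≤ Metric.diam K := Metric.diam_nonneg
  have hfacd : (0:ℝ) ≤ 1 + C * Metric.diam K := by nlinarith [mul_nonneg hC0 hdiamK0]
  have hB1 : 1 ≤ B := by
    have h2 : (1:ℝ) ≤ Real.exp (C * a / (1 - a)) :=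
      Real.one_le_exp (by
        have h6 : (0:ℝ) < 1 - a := by linarith
        positivity)
    nlinarith [mul_nonneg hC0 hdiamK0]
  have hmain : ∀ I : List (Fin p), ∀ z ∈ K, ∀ z' ∈ K,
      ‖dProd g I z‖ ≤ B * ‖dProd g I z'‖ := by
    intro I z hz z' hz'
    cases I with
    | nil => simpa using hB1
    | cons i I =>
      have hf1 : ‖deriv (g i) z‖ ≤ (1 + C * Metric.diam K) * ‖deriv (g i) z'‖ :=
        hstep i z hz z' hz' _ (Metric.dist_le_diam_of_mem hKbd hz hz')
      have h2 := est I [i] (by simp) z hz z' hz'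
      have hwi : ∀ w, wordMap g [i] w = g i w := fun w => rfl
      simp only [List.length_singleton, hwi] at h2
      have h3 := prodbd I.length 1 le_rfl
      calc ‖dProd g (i :: I) z‖ = ‖deriv (g i) z‖ * ‖dProd g I (g i z)‖ := by
            rw [dProd_cons, norm_mul]
        _ ≤ ((1 + C * Metric.diam K) * ‖deriv (g i) z'‖) *
              ((∏ k ∈ Finset.range I.length, (1 + C * a ^ (1 + k))) *
                ‖dProd g I (g i z')‖) :=
            mul_le_mul hf1 h2 (norm_nonneg _)
              (mul_nonneg hfacd (norm_nonneg _))
        _ ≤ ((1 + C * Metric.diam K) * ‖deriv (g i) z'‖) *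
              (Real.exp (C * a / (1 - a)) * ‖dProd g I (g i z')‖) := by
            apply mul_le_mul_of_nonneg_left
              (mul_le_mul_of_nonneg_right h3 (norm_nonneg _))
              (mul_nonneg hfacd (norm_nonneg _))
        _ = B * ‖dProd g (i :: I) z'‖ := by
            rw [hB_def, dProd_cons, norm_mul]; ring
  -- bound on Sn
  have hSnB : ∀ n, Sn g s n ≤ B := by
    intro n
    apply Real.sSup_le _ (by linarith)
    rintro x ⟨I, hlen, z, hz, z', hz', rfl⟩
    rw [hderiv_eq I z hz, hderiv_eq I z' hz']
    have hpos : 0 < ‖dProd g I z'‖ := norm_pos_iff.mpr (hdprod_ne I z' hz')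
    rw [div_le_iff₀ hpos]
    exact hmain I z hz z' hz'
  have hBdd : BddAbove (Set.range (Sn g s)) := by
    refine ⟨B, ?_⟩
    rintro _ ⟨n, rfl⟩
    exact hSnB n
  have hSn0 : Sn g s 0 = 1 := by
    have hset : {x : ℝ | ∃ I : List (Fin p), I.length = 0 ∧
        ∃ z ∈ closure (square0 s), ∃ z' ∈ closure (square0 s),
          x = ‖deriv (wordMap g I) z‖ / ‖deriv (wordMap g I) z'‖} = {1} := by
      ext x
      simp only [Set.mem_setOf_eq, Set.mem_singleton_iff]
      constructor
      · rintro ⟨I, hI, z, hz, z', hz', rfl⟩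
        rw [List.length_eq_zero_iff] at hI
        subst hI
        rw [hderiv_eq [] z hz, hderiv_eq [] z' hz']
        simp
      · rintro rfl
        exact ⟨[], rfl, 0, hsubK h0sq, 0, hsubK h0sq, by
          rw [hderiv_eq [] 0 (hsubK h0sq)]; simp⟩
    rw [Sn, hset, csSup_singleton]
  refine ⟨hBdd, ?_⟩
  intro ε hε
  have hD1 : 1 ≤ iSup (Sn g s) := hSn0 ▸ le_ciSup hBdd 0
  have hlt : iSup (Sn g s) / (1 + ε) < iSup (Sn g s) :=
    div_lt_self (by linarith) (by linarith)
  obtain ⟨nε, hnε⟩ := exists_lt_of_lt_ciSup hlt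
  refine ⟨nε, fun n _ => ?_⟩
  have h1 : Sn g s n ≤ iSup (Sn g s) := le_ciSup hBdd n
  have h2 : iSup (Sn g s) < Sn g s nε * (1 + ε) := (div_lt_iff₀ (by linarith)).mp hnε
  linarith
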